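/- Let R be a nonempty bicolored rectangular family satisfying the standing assumptions, let z* = mis_LP(R), and let P = { x ∈ QSTAB(R) : Σ_{R∈R} x_R = z* }. Let x* be an extreme point of P that minimizes Σ_{R∈R} area(R)·x_R over P, where area(Γ(a,b)) = (b_x − a_x)(b_y − a_y). Then x* is integral, i.e. x*_R ∈ {0,1} for every R ∈ R, and the support { R ∈ R : x*_R > 0 } is a maximum-cardinality independent set of R. -/

import Mathlib

open scoped Classical

noncomputable section

abbrev Pt : Type := ℝ × ℝ
abbrev Rect : Type := Set Pt

def IsRect (R : Rect) : Prop := ∃ a b : Pt, a ≤ b ∧ R = Set.Icc a b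

def Intersects (R S : Rect) : Prop := (R ∩ S).Nonempty

def IndepFamily (I : Set Rect) : Prop :=
  ∀ R ∈ I, ∀ S ∈ I, R ≠ S → R ∩ S = ∅

def IsHittingSet (H : Set Pt) (C : Set Rect) : Prop :=
  ∀ R ∈ C, ∃ p ∈ H, p ∈ R

def mis (C : Set Rect) : ℕ :=
  sSup {n | ∃ I : Finset Rect, ↑I ⊆ C ∧ IndepFamily ↑I ∧ I.card = n}

def mhs (C : Set Rect) : ℕ :=
  sInf {n | ∃ H : Finset Pt, IsHittingSet ↑H C ∧ H.card = n}

def brf (A B : Finset Pt) (Z : Set Pt) : Set Rect :=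
  {R | ∃ a ∈ A, ∃ b ∈ B, a ≤ b ∧ Set.Icc a b ⊆ Z ∧ R = Set.Icc a b}

def Standing (A B : Finset Pt) (Z : Set Pt) : Prop :=
  (A ∩ B = ∅) ∧ (↑(A ∪ B) ⊆ Z) ∧
  (∀ p ∈ A ∪ B, ∃ i j : ℤ, 1 ≤ i ∧ i ≤ ((A ∪ B).card : ℤ) ∧ 1 ≤ j ∧ j ≤ ((A ∪ B).card : ℤ) ∧
    p = ((i : ℝ), (j : ℝ))) ∧
  (∀ p ∈ A ∪ B, ∀ q ∈ A ∪ B, p ≠ q → p.1 ≠ q.1 ∧ p.2 ≠ q.2)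

def minRects (C : Set Rect) : Set Rect :=
  {R | R ∈ C ∧ ∀ S ∈ C, S ⊆ R → S = R}

def IsRectCorner (p : Pt) (R : Rect) : Prop :=
  ∃ a b : Pt, a ≤ b ∧ R = Set.Icc a b ∧
    (p = a ∨ p = b ∨ p = (a.1, b.2) ∨ p = (b.1, a.2))

def CornerFree (R S : Rect) : Prop :=
  (∀ p, IsRectCorner p R → p ∉ interior S) ∧ (∀ p, IsRectCorner p S → p ∉ interior R)

def CFI (K : Set Rect) : Prop :=
  ∀ R ∈ K, ∀ S ∈ K, R ≠ S → CornerFree R S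

def interGraph (K : Set Rect) : SimpleGraph K :=
  SimpleGraph.fromRel (fun R S => Intersects (R : Rect) (S : Rect))

def IsComparabilityGraph {V : Type*} (G : SimpleGraph V) : Prop :=
  ∃ le : V → V → Prop, (∀ v, le v v) ∧
    (∀ u v w, le u v → le v w → le u w) ∧
    (∀ u v, le u v → le v u → u = v) ∧
    (∀ u v, G.Adj u v ↔ u ≠ v ∧ (le u v ∨ le v u))

def QSTAB (n : ℕ) (C : Finset Rect) : Set (Rect → ℝ) :=
  {x | (∀ R, 0 ≤ x R) ∧ (∀ R ∉ C, x R = 0) ∧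
    ∀ i j : ℤ, 1 ≤ i → i ≤ (n : ℤ) → 1 ≤ j → j ≤ (n : ℤ) →
      ∑ R ∈ C.filter (fun R => ((i : ℝ), (j : ℝ)) ∈ R), x R ≤ 1}

def misLP (n : ℕ) (C : Finset Rect) : ℝ :=
  sSup {s | ∃ x ∈ QSTAB n C, s = ∑ R ∈ C, x R}

def cliqueNum' {V : Type*} (G : SimpleGraph V) : ℕ :=
  sSup {n | ∃ s : Finset V, G.IsNClique n s}

def IsPerfect {V : Type*} (G : SimpleGraph V) : Prop :=
  ∀ S : Set V, (G.induce S).chromaticNumber = (cliqueNum' (G.induce S) : ℕ∞)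

def rectArea (R : Rect) : ℝ :=
  (sSup (Prod.fst '' R) - sInf (Prod.fst '' R)) *
  (sSup (Prod.snd '' R) - sInf (Prod.snd '' R))

def blCorner (R : Rect) : Pt := (sInf (Prod.fst '' R), sInf (Prod.snd '' R))
def trCorner (R : Rect) : Pt := (sSup (Prod.fst '' R), sSup (Prod.snd '' R))


/-! ### Auxiliary geometry lemmas -/

lemma icc_corner_eq {a b c d : Pt} (hab : a ≤ b) (hcd : c ≤ d)
    (h : Set.Icc a b = Set.Icc c d) : a = c ∧ b = d := by
  have h1 : a ∈ Set.Icc c d := h ▸ Set.left_mem_Icc.mpr hab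
  have h2 : c ∈ Set.Icc a b := h.symm ▸ Set.left_mem_Icc.mpr hcd
  have h3 : b ∈ Set.Icc c d := h ▸ Set.right_mem_Icc.mpr hab
  have h4 : d ∈ Set.Icc a b := h.symm ▸ Set.right_mem_Icc.mpr hcd
  rw [Set.mem_Icc] at h1 h2 h3 h4
  exact ⟨le_antisymm h2.1 h1.1, le_antisymm h3.2 h4.2⟩

lemma fst_image_Icc {a b : Pt} (hab : a ≤ b) :
    Prod.fst '' (Set.Icc a b) = Set.Icc a.1 b.1 := by
  rw [Set.Icc_prod_eq, Set.fst_image_prod _ (Set.nonempty_Icc.mpr hab.2)]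

lemma snd_image_Icc {a b : Pt} (hab : a ≤ b) :
    Prod.snd '' (Set.Icc a b) = Set.Icc a.2 b.2 := by
  rw [Set.Icc_prod_eq, Set.snd_image_prod (Set.nonempty_Icc.mpr hab.1)]

lemma rectArea_Icc {a b : Pt} (hab : a ≤ b) :
    rectArea (Set.Icc a b) = (b.1 - a.1) * (b.2 - a.2) := by
  rw [rectArea, fst_image_Icc hab, snd_image_Icc hab,
    csSup_Icc hab.1, csInf_Icc hab.1, csSup_Icc hab.2, csInf_Icc hab.2]

lemma mem_Icc_pt {a b q : Pt} : q ∈ Set.Icc a b ↔ (a.1 ≤ q.1 ∧ a.2 ≤ q.2) ∧ q.1 ≤ b.1 ∧ q.2 ≤ b.2 := by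
  rw [Set.mem_Icc, Prod.le_def, Prod.le_def]

lemma icc_subset_pt {a b c d : Pt} (hab : a ≤ b) :
    Set.Icc a b ⊆ Set.Icc c d ↔ (c.1 ≤ a.1 ∧ c.2 ≤ a.2) ∧ b.1 ≤ d.1 ∧ b.2 ≤ d.2 := by
  rw [Set.Icc_subset_Icc_iff hab, Prod.le_def, Prod.le_def]

lemma icc_prod_repr {a b : Pt} (hab : a ≤ b) :
    Set.Icc a b = (Prod.fst '' Set.Icc a b) ×ˢ (Prod.snd '' Set.Icc a b) := by
  rw [fst_image_Icc hab, snd_image_Icc hab, Set.Icc_prod_Icc]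

/-! ### Standing assumption extraction -/

lemma stand_ne_pts {A B : Finset Pt} {Z : Set Pt} (hst : Standing A B Z)
    {a b : Pt} (ha : a ∈ A) (hb : b ∈ B) : a ≠ b := by
  intro h
  have : a ∈ A ∩ B := Finset.mem_inter.mpr ⟨ha, h ▸ hb⟩
  simp [hst.1] at this

lemma stand_coord1 {A B : Finset Pt} {Z : Set Pt} (hst : Standing A B Z)
    {p q : Pt} (hp : p ∈ A ∪ B) (hq : q ∈ A ∪ B) (h : p.1 = q.1) : p = q := by
  by_contra hne
  exact (hst.2.2.2 p hp q hq hne).1 h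

lemma stand_coord2 {A B : Finset Pt} {Z : Set Pt} (hst : Standing A B Z)
    {p q : Pt} (hp : p ∈ A ∪ B) (hq : q ∈ A ∪ B) (h : p.2 = q.2) : p = q := by
  by_contra hne
  exact (hst.2.2.2 p hp q hq hne).2 h

lemma stand_strict {A B : Finset Pt} {Z : Set Pt} (hst : Standing A B Z)
    {a b : Pt} (ha : a ∈ A) (hb : b ∈ B) (hab : a ≤ b) : a.1 < b.1 ∧ a.2 < b.2 := by
  have hne := stand_ne_pts hst ha hb
  have h := hst.2.2.2 a (Finset.mem_union_left _ ha) b (Finset.mem_union_right _ hb) hne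
  exact ⟨lt_of_le_of_ne hab.1 h.1, lt_of_le_of_ne hab.2 h.2⟩

lemma blCorner_Icc {a b : Pt} (hab : a ≤ b) : blCorner (Set.Icc a b) = a := by
  rw [blCorner, fst_image_Icc hab, snd_image_Icc hab, csInf_Icc hab.1, csInf_Icc hab.2]

lemma trCorner_Icc {a b : Pt} (hab : a ≤ b) : trCorner (Set.Icc a b) = b := by
  rw [trCorner, fst_image_Icc hab, snd_image_Icc hab, csSup_Icc hab.1, csSup_Icc hab.2]

lemma brf_corners {A B : Finset Pt} {Z : Set Pt} (hst : Standing A B Z) {R : Rect}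
    (hR : R ∈ brf A B Z) :
    blCorner R ∈ A ∧ trCorner R ∈ B ∧ blCorner R ≤ trCorner R ∧
      R = Set.Icc (blCorner R) (trCorner R) ∧ R ⊆ Z ∧
      (blCorner R).1 < (trCorner R).1 ∧ (blCorner R).2 < (trCorner R).2 := by
  obtain ⟨a, ha, b, hb, hab, hZ, rfl⟩ := hR
  rw [blCorner_Icc hab, trCorner_Icc hab]
  have h := stand_strict hst ha hb hab
  exact ⟨ha, hb, hab, rfl, hZ, h.1, h.2⟩

/-! ### QSTAB basics -/

lemma qstab_coord_le_one {n : ℕ} {C : Finset Rect} {x : Rect → ℝ} (hx : x ∈ QSTAB n C)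
    {R : Rect} (hR : R ∈ C) {i j : ℤ} (hi1 : 1 ≤ i) (hi2 : i ≤ (n : ℤ))
    (hj1 : 1 ≤ j) (hj2 : j ≤ (n : ℤ)) (hmem : ((i : ℝ), (j : ℝ)) ∈ R) : x R ≤ 1 := by
  refine le_trans ?_ (hx.2.2 i j hi1 hi2 hj1 hj2)
  exact Finset.single_le_sum (fun T _ => hx.1 T) (Finset.mem_filter.mpr ⟨hR, hmem⟩)

lemma brf_grid_corner {A B : Finset Pt} {Z : Set Pt} (hst : Standing A B Z)
    {p : Pt} (hp : p ∈ A ∪ B) :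
    ∃ i j : ℤ, 1 ≤ i ∧ i ≤ ((A ∪ B).card : ℤ) ∧ 1 ≤ j ∧ j ≤ ((A ∪ B).card : ℤ) ∧
      p = ((i : ℝ), (j : ℝ)) := hst.2.2.1 p hp

lemma qstab_sum_le {A B : Finset Pt} {Z : Set Pt} (hst : Standing A B Z)
    {C : Finset Rect} (hC : ↑C = brf A B Z) {x : Rect → ℝ}
    (hx : x ∈ QSTAB (A ∪ B).card C) : ∑ R ∈ C, x R ≤ (C.card : ℝ) := by
  have h1 : ∀ R ∈ C, x R ≤ 1 := by
    intro R hR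
    have hRb : R ∈ brf A B Z := by rw [← hC]; exact_mod_cast Finset.mem_coe.mpr hR
    obtain ⟨ha, hb, hab, hrepr, _, _, _⟩ := brf_corners hst hRb
    obtain ⟨i, j, hi1, hi2, hj1, hj2, hp⟩ :=
      brf_grid_corner hst (Finset.mem_union_left _ ha)
    refine qstab_coord_le_one hx hR hi1 hi2 hj1 hj2 ?_
    rw [← hp]
    have hm := Set.left_mem_Icc.mpr hab
    rwa [← hrepr] at hm
  calc ∑ R ∈ C, x R ≤ ∑ _R ∈ C, (1 : ℝ) := Finset.sum_le_sum h1
    _ = C.card := by simp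

lemma qstab_bdd {A B : Finset Pt} {Z : Set Pt} (hst : Standing A B Z)
    {C : Finset Rect} (hC : ↑C = brf A B Z) :
    BddAbove {s | ∃ x ∈ QSTAB (A ∪ B).card C, s = ∑ R ∈ C, x R} := by
  refine ⟨(C.card : ℝ), ?_⟩
  rintro s ⟨y, hy, rfl⟩
  exact qstab_sum_le hst hC hy

lemma le_misLP {A B : Finset Pt} {Z : Set Pt} (hst : Standing A B Z)
    {C : Finset Rect} (hC : ↑C = brf A B Z) {y : Rect → ℝ}
    (hy : y ∈ QSTAB (A ∪ B).card C) :
    ∑ R ∈ C, y R ≤ misLP (A ∪ B).card C :=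
  le_csSup (qstab_bdd hst hC) ⟨y, hy, rfl⟩

/-! ### Extreme point of the face is extreme in QSTAB -/

lemma extreme_in_qstab {A B : Finset Pt} {Z : Set Pt} (hst : Standing A B Z)
    {C : Finset Rect} (hC : ↑C = brf A B Z) {P : Set (Rect → ℝ)}
    (hP : P = {x | x ∈ QSTAB (A ∪ B).card C ∧ ∑ R ∈ C, x R = misLP (A ∪ B).card C})
    {x : Rect → ℝ} (hx : x ∈ Set.extremePoints ℝ P) :
    x ∈ Set.extremePoints ℝ (QSTAB (A ∪ B).card C) := by
  subst hP
  obtain ⟨⟨hxQ, hxs⟩, hext⟩ := hx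
  refine ⟨hxQ, ?_⟩
  intro y hy z hz hseg
  obtain ⟨t1, t2, ht1, ht2, hts, heq⟩ := hseg
  have hsum : t1 * (∑ R ∈ C, y R) + t2 * (∑ R ∈ C, z R) = misLP (A ∪ B).card C := by
    rw [← hxs, ← heq]
    simp [Finset.mul_sum, Finset.sum_add_distrib]
  have hys := le_misLP hst hC hy
  have hzs := le_misLP hst hC hz
  have hM : t1 * misLP (A ∪ B).card C + t2 * misLP (A ∪ B).card C
      = misLP (A ∪ B).card C := by rw [← add_mul, hts, one_mul]
  have hy1 : ∑ R ∈ C, y R = misLP (A ∪ B).card C := by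
    by_contra h
    have hlt : ∑ R ∈ C, y R < misLP (A ∪ B).card C := lt_of_le_of_ne hys h
    linarith [mul_lt_mul_of_pos_left hlt ht1, mul_le_mul_of_nonneg_left hzs (le_of_lt ht2)]
  have hz1 : ∑ R ∈ C, z R = misLP (A ∪ B).card C := by
    by_contra h
    have hlt : ∑ R ∈ C, z R < misLP (A ∪ B).card C := lt_of_le_of_ne hzs h
    linarith [mul_lt_mul_of_pos_left hlt ht2, mul_le_mul_of_nonneg_left hys (le_of_lt ht1)]
  exact hext ⟨hy, hy1⟩ ⟨hz, hz1⟩ ⟨t1, t2, ht1, ht2, hts, heq⟩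

/-! ### The exchange argument -/

lemma exchange_contra {A B : Finset Pt} {Z : Set Pt} (hst : Standing A B Z)
    {C : Finset Rect} (hC : ↑C = brf A B Z) {P : Set (Rect → ℝ)}
    (hP : P = {x | x ∈ QSTAB (A ∪ B).card C ∧ ∑ R ∈ C, x R = misLP (A ∪ B).card C})
    {x : Rect → ℝ} (hxP : x ∈ P)
    (hmin : ∀ y ∈ P, ∑ R ∈ C, rectArea R * x R ≤ ∑ R ∈ C, rectArea R * y R)
    {R S N1 N2 : Rect} (hR : R ∈ C) (hS : S ∈ C) (hN1 : N1 ∈ C) (hN2 : N2 ∈ C)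
    (hRS : R ≠ S) (hxR : 0 < x R) (hxS : 0 < x S)
    (hcov1 : ∀ q : Pt, q ∈ N1 ∨ q ∈ N2 → q ∈ R ∨ q ∈ S)
    (hcov2 : ∀ q : Pt, q ∈ N1 → q ∈ N2 → q ∈ R ∧ q ∈ S)
    (harea : rectArea N1 + rectArea N2 < rectArea R + rectArea S) : False := by
  subst hP
  obtain ⟨hxQ, hxsum⟩ := hxP
  set ε := min (x R) (x S) / 2 with hε
  have hmin2 : 0 < min (x R) (x S) := lt_min hxR hxS
  have hε0 : 0 < ε := by rw [hε]; linarith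
  set d : Rect → ℝ := fun U => (if U = N1 then 1 else 0) + (if U = N2 then 1 else 0)
    - (if U = R then 1 else 0) - (if U = S then 1 else 0) with hd
  set y : Rect → ℝ := fun U => x U + ε * d U with hy
  have hsumd : ∀ (F : Finset Rect) (f : Rect → ℝ), ∑ U ∈ F, f U * d U =
      (if N1 ∈ F then f N1 else 0) + (if N2 ∈ F then f N2 else 0)
      - (if R ∈ F then f R else 0) - (if S ∈ F then f S else 0) := by
    intro F f
    simp only [hd, mul_add, mul_sub, Finset.sum_add_distrib, Finset.sum_sub_distrib,
      mul_ite, mul_one, mul_zero, Finset.sum_ite_eq' F]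
  have hdlb : ∀ U, -2 ≤ d U := by
    intro U; simp only [hd]; split_ifs <;> norm_num
  have hyQ : y ∈ QSTAB (A ∪ B).card C := by
    refine ⟨?_, ?_, ?_⟩
    · intro U
      by_cases h1 : U = R ∨ U = S
      · have h3 : 2 * ε ≤ x U := by
          rcases h1 with rfl | rfl
          · have := min_le_left (x U) (x S); linarith
          · have := min_le_right (x R) (x U); linarith
        have h4 : ε * (-2) ≤ ε * d U := mul_le_mul_of_nonneg_left (hdlb U) hε0.le
        simp only [hy]; linarith
      · push_neg at h1
        have h2 : 0 ≤ d U := by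
          simp only [hd, if_neg h1.1, if_neg h1.2]; split_ifs <;> norm_num
        exact add_nonneg (hxQ.1 U) (mul_nonneg hε0.le h2)
    · intro U hU
      have e1 : U ≠ N1 := fun h => hU (h ▸ hN1)
      have e2 : U ≠ N2 := fun h => hU (h ▸ hN2)
      have e3 : U ≠ R := fun h => hU (h ▸ hR)
      have e4 : U ≠ S := fun h => hU (h ▸ hS)
      simp only [hy, hd, if_neg e1, if_neg e2, if_neg e3, if_neg e4, hxQ.2.1 U hU]
      ring
    · intro i j hi1 hi2 hj1 hj2
      set q : Pt := ((i : ℝ), (j : ℝ)) with hq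
      set F := C.filter (fun T => q ∈ T) with hF
      have hsy : ∑ U ∈ F, y U = ∑ U ∈ F, x U + ε * ∑ U ∈ F, (1 : ℝ) * d U := by
        simp only [hy, Finset.sum_add_distrib, Finset.mul_sum, one_mul]
      have hmF : ∀ T, T ∈ C → (T ∈ F ↔ q ∈ T) := by
        intro T hT; simp [hF, Finset.mem_filter, hT]
      have hdF : ∑ U ∈ F, (1 : ℝ) * d U ≤ 0 := by
        rw [hsumd F (fun _ => (1 : ℝ))]
        have hc1 := hcov1 q
        have hc2 := hcov2 q
        by_cases hq1 : q ∈ N1 <;> by_cases hq2 : q ∈ N2 <;> by_cases hq3 : q ∈ R <;>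
          by_cases hq4 : q ∈ S <;>
          simp only [hmF _ hN1, hmF _ hN2, hmF _ hR, hmF _ hS, hq1, hq2, hq3, hq4,
            if_true, if_false] <;>
          first
            | exact absurd (hc2 hq1 hq2).2 hq4
            | exact absurd (hc2 hq1 hq2).1 hq3
            | exact (hc1 (Or.inl hq1)).elim (fun h => absurd h hq3) (fun h => absurd h hq4)
            | exact (hc1 (Or.inr hq2)).elim (fun h => absurd h hq3) (fun h => absurd h hq4)
            | norm_num
      have hbase := hxQ.2.2 i j hi1 hi2 hj1 hj2
      have hεd : ε * ∑ U ∈ F, (1 : ℝ) * d U ≤ 0 :=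
        mul_nonpos_of_nonneg_of_nonpos hε0.le hdF
      calc ∑ T ∈ F, y T = ∑ U ∈ F, x U + ε * ∑ U ∈ F, (1 : ℝ) * d U := hsy
        _ ≤ ∑ U ∈ F, x U := by linarith
        _ ≤ 1 := hbase
  have hysum : ∑ U ∈ C, y U = misLP (A ∪ B).card C := by
    have : ∑ U ∈ C, y U = ∑ U ∈ C, x U + ε * ∑ U ∈ C, (1 : ℝ) * d U := by
      simp only [hy, Finset.sum_add_distrib, Finset.mul_sum, one_mul]
    rw [this, hsumd C (fun _ => (1 : ℝ)), if_pos hN1, if_pos hN2, if_pos hR, if_pos hS]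
    rw [hxsum]; ring
  have hyP : y ∈ {x | x ∈ QSTAB (A ∪ B).card C ∧ ∑ R ∈ C, x R = misLP (A ∪ B).card C} :=
    ⟨hyQ, hysum⟩
  have hle := hmin y hyP
  have hexp : ∑ U ∈ C, rectArea U * y U
      = ∑ U ∈ C, rectArea U * x U + ε * ∑ U ∈ C, rectArea U * d U := by
    rw [Finset.mul_sum, ← Finset.sum_add_distrib]
    apply Finset.sum_congr rfl
    intro U _
    simp only [hy]; ring
  rw [hexp, hsumd C rectArea, if_pos hN1, if_pos hN2, if_pos hR, if_pos hS] at hle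
  nlinarith [mul_neg_of_pos_of_neg hε0 (by linarith :
    rectArea N1 + rectArea N2 - rectArea R - rectArea S < 0)]

/-! ### Area comparisons and the two exchange instances -/

lemma ne_coord1 {A B : Finset Pt} {Z : Set Pt} (hst : Standing A B Z)
    {p q : Pt} (hp : p ∈ A ∪ B) (hq : q ∈ A ∪ B) (h : p ≠ q) : p.1 ≠ q.1 ∧ p.2 ≠ q.2 :=
  hst.2.2.2 p hp q hq h

lemma area_proper_lt {A B : Finset Pt} {Z : Set Pt} (hst : Standing A B Z)
    {a b c d : Pt} (ha : a ∈ A) (hb : b ∈ B) (hc : c ∈ A) (hd : d ∈ B)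
    (hab : a ≤ b) (hcd : c ≤ d)
    (hsub : Set.Icc a b ⊆ Set.Icc c d) (hne : Set.Icc a b ≠ Set.Icc c d) :
    rectArea (Set.Icc a b) < rectArea (Set.Icc c d) := by
  have hco := (icc_subset_pt hab).mp hsub
  have hx1 : 0 ≤ b.1 - a.1 := by linarith [hab.1]
  have hx2 : 0 ≤ b.2 - a.2 := by linarith [hab.2]
  rw [rectArea_Icc hab, rectArea_Icc hcd]
  by_cases hac : a = c
  · have hbd : b ≠ d := by
      intro h; exact hne (by rw [hac, h])
    have h1 := ne_coord1 hst (Finset.mem_union_right _ hb) (Finset.mem_union_right _ hd) hbd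
    have hb1 : b.1 < d.1 := lt_of_le_of_ne hco.2.1 h1.1
    have hb2 : b.2 < d.2 := lt_of_le_of_ne hco.2.2 h1.2
    rw [hac] at hx1 hx2 ⊢
    nlinarith
  · have h1 := ne_coord1 hst (Finset.mem_union_left _ ha) (Finset.mem_union_left _ hc) hac
    have ha1 : c.1 < a.1 := lt_of_le_of_ne hco.1.1 (Ne.symm h1.1)
    have ha2 : c.2 < a.2 := lt_of_le_of_ne hco.1.2 (Ne.symm h1.2)
    nlinarith [hco.2.1, hco.2.2]

/-- Exchange for a proper sub-rectangle of a support rectangle (applied with a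
second support rectangle `S'`). -/
lemma min_exchange {A B : Finset Pt} {Z : Set Pt} (hst : Standing A B Z)
    {C : Finset Rect} (hC : ↑C = brf A B Z) {P : Set (Rect → ℝ)}
    (hP : P = {x | x ∈ QSTAB (A ∪ B).card C ∧ ∑ R ∈ C, x R = misLP (A ∪ B).card C})
    {x : Rect → ℝ} (hxP : x ∈ P)
    (hmin : ∀ y ∈ P, ∑ R ∈ C, rectArea R * x R ≤ ∑ R ∈ C, rectArea R * y R)
    {S S' T : Rect} (hS : S ∈ C) (hS' : S' ∈ C) (hT : T ∈ C)
    (hSS' : S ≠ S') (hxS : 0 < x S) (hxS' : 0 < x S')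
    (hsub : T ⊆ S) (hTne : rectArea T < rectArea S) : False := by
  refine exchange_contra hst hC hP hxP hmin hS' hS hT hS' (Ne.symm hSS') hxS' hxS
    ?_ ?_ (by linarith)
  · rintro q (hq | hq)
    · exact Or.inr (hsub hq)
    · exact Or.inl hq
  · intro q hq1 hq2
    exact ⟨hq2, hsub hq1⟩

/-- Exchange for a crossing pair (cross in x of type L, cross in y of type R). -/
lemma cross_exchange {A B : Finset Pt} {Z : Set Pt} (hst : Standing A B Z)
    {C : Finset Rect} (hC : ↑C = brf A B Z) {P : Set (Rect → ℝ)}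
    (hP : P = {x | x ∈ QSTAB (A ∪ B).card C ∧ ∑ R ∈ C, x R = misLP (A ∪ B).card C})
    {x : Rect → ℝ} (hxP : x ∈ P)
    (hmin : ∀ y ∈ P, ∑ R ∈ C, rectArea R * x R ≤ ∑ R ∈ C, rectArea R * y R)
    {a b c d : Pt} (ha : a ∈ A) (hb : b ∈ B) (hc : c ∈ A) (hd : d ∈ B)
    (hab : a ≤ b) (hcd : c ≤ d)
    (hR : Set.Icc a b ∈ C) (hS : Set.Icc c d ∈ C)
    (h1 : a.1 < c.1) (h2 : c.1 < b.1) (h3 : b.1 < d.1)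
    (h4 : c.2 < a.2) (h5 : a.2 < d.2) (h6 : d.2 < b.2)
    (hxR : 0 < x (Set.Icc a b)) (hxS : 0 < x (Set.Icc c d)) : False := by
  have had : a ≤ d := ⟨by linarith, by linarith⟩
  have hcb : c ≤ b := ⟨by linarith, by linarith⟩
  have hZR : Set.Icc a b ⊆ Z := by
    have : Set.Icc a b ∈ brf A B Z := by rw [← hC]; exact hR
    obtain ⟨a', _, b', _, hab', hZ, heq⟩ := this
    rw [heq]; exact hZ
  have hZS : Set.Icc c d ⊆ Z := by
    have : Set.Icc c d ∈ brf A B Z := by rw [← hC]; exact hS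
    obtain ⟨a', _, b', _, hab', hZ, heq⟩ := this
    rw [heq]; exact hZ
  have hcov1 : ∀ q : Pt, q ∈ Set.Icc a d ∨ q ∈ Set.Icc c b →
      q ∈ Set.Icc a b ∨ q ∈ Set.Icc c d := by
    rintro q (hq | hq) <;> rw [mem_Icc_pt] at hq
    · by_cases hq1 : q.1 ≤ b.1
      · exact Or.inl (mem_Icc_pt.mpr ⟨⟨hq.1.1, hq.1.2⟩, hq1, by linarith [hq.2.2]⟩)
      · exact Or.inr (mem_Icc_pt.mpr ⟨⟨by linarith, by linarith [hq.1.2]⟩, hq.2.1, hq.2.2⟩)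
    · by_cases hq2 : q.2 ≤ d.2
      · exact Or.inr (mem_Icc_pt.mpr ⟨⟨hq.1.1, hq.1.2⟩, by linarith [hq.2.1], hq2⟩)
      · exact Or.inl (mem_Icc_pt.mpr ⟨⟨by linarith [hq.1.1], by linarith⟩, hq.2.1, hq.2.2⟩)
  have hcov2 : ∀ q : Pt, q ∈ Set.Icc a d → q ∈ Set.Icc c b →
      q ∈ Set.Icc a b ∧ q ∈ Set.Icc c d := by
    intro q hq1 hq2
    rw [mem_Icc_pt] at hq1 hq2
    constructor
    · exact mem_Icc_pt.mpr ⟨⟨hq1.1.1, hq1.1.2⟩, hq2.2.1, by linarith [hq1.2.2]⟩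
    · exact mem_Icc_pt.mpr ⟨⟨hq2.1.1, by linarith [hq1.1.2]⟩, by linarith [hq2.2.1], hq1.2.2⟩
  have hN1Z : Set.Icc a d ⊆ Z := by
    intro q hq
    rcases hcov1 q (Or.inl hq) with h | h
    · exact hZR h
    · exact hZS h
  have hN2Z : Set.Icc c b ⊆ Z := by
    intro q hq
    rcases hcov1 q (Or.inr hq) with h | h
    · exact hZR h
    · exact hZS h
  have hN1 : Set.Icc a d ∈ C := by
    rw [← Finset.mem_coe, hC]; exact ⟨a, ha, d, hd, had, hN1Z, rfl⟩
  have hN2 : Set.Icc c b ∈ C := by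
    rw [← Finset.mem_coe, hC]; exact ⟨c, hc, b, hb, hcb, hN2Z, rfl⟩
  have hRS : Set.Icc a b ≠ Set.Icc c d := by
    intro h
    exact absurd ((icc_corner_eq hab hcd h).1 ▸ h1) (lt_irrefl _)
  have harea : rectArea (Set.Icc a d) + rectArea (Set.Icc c b)
      < rectArea (Set.Icc a b) + rectArea (Set.Icc c d) := by
    rw [rectArea_Icc hab, rectArea_Icc hcd, rectArea_Icc had, rectArea_Icc hcb]
    nlinarith [mul_pos (sub_pos.mpr h1) (sub_pos.mpr h6),
      mul_pos (sub_pos.mpr h3) (sub_pos.mpr h4)]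
  exact exchange_contra hst hC hP hxP hmin hR hS hN1 hN2 hRS hxR hxS hcov1 hcov2 harea

/-! ### The comparability order on support rectangles -/

def rle (R S : Rect) : Prop :=
  R = S ∨ ((R ∩ S).Nonempty ∧ Prod.fst '' S ⊆ Prod.fst '' R ∧ Prod.snd '' R ⊆ Prod.snd '' S)

lemma rle_refl (R : Rect) : rle R R := Or.inl rfl

lemma rle_of_coords {a b c d : Pt} (hab : a ≤ b) (hcd : c ≤ d)
    (hint : (Set.Icc a b ∩ Set.Icc c d).Nonempty)
    (h1 : a.1 ≤ c.1) (h2 : d.1 ≤ b.1) (h3 : c.2 ≤ a.2) (h4 : b.2 ≤ d.2) :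
    rle (Set.Icc a b) (Set.Icc c d) := by
  refine Or.inr ⟨hint, ?_, ?_⟩
  · rw [fst_image_Icc hab, fst_image_Icc hcd]
    exact Set.Icc_subset_Icc h1 h2
  · rw [snd_image_Icc hab, snd_image_Icc hcd]
    exact Set.Icc_subset_Icc h3 h4

lemma rle_coords {a b c d : Pt} (hab : a ≤ b) (hcd : c ≤ d)
    (h : rle (Set.Icc a b) (Set.Icc c d)) :
    a.1 ≤ c.1 ∧ d.1 ≤ b.1 ∧ c.2 ≤ a.2 ∧ b.2 ≤ d.2 := by
  rcases h with h | ⟨hint, h1, h2⟩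
  · obtain ⟨rfl, rfl⟩ := icc_corner_eq hab hcd h
    exact ⟨le_refl _, le_refl _, le_refl _, le_refl _⟩
  · rw [fst_image_Icc hab, fst_image_Icc hcd] at h1
    rw [snd_image_Icc hab, snd_image_Icc hcd] at h2
    have hh1 := (Set.Icc_subset_Icc_iff hcd.1).mp h1
    have hh2 := (Set.Icc_subset_Icc_iff hab.2).mp h2
    exact ⟨hh1.1, hh1.2, hh2.1, hh2.2⟩

lemma rle_antisymm {a b c d : Pt} (hab : a ≤ b) (hcd : c ≤ d)
    (h1 : rle (Set.Icc a b) (Set.Icc c d)) (h2 : rle (Set.Icc c d) (Set.Icc a b)) :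
    Set.Icc a b = Set.Icc c d := by
  have k1 := rle_coords hab hcd h1
  have k2 := rle_coords hcd hab h2
  have : a = c := Prod.ext (le_antisymm k1.1 k2.1) (le_antisymm k2.2.2.1 k1.2.2.1)
  have hbd : b = d := Prod.ext (le_antisymm k2.2.1 k1.2.1) (le_antisymm k1.2.2.2 k2.2.2.2)
  rw [this, hbd]

lemma rle_trans {a b c d e f : Pt} (hab : a ≤ b) (hcd : c ≤ d) (hef : e ≤ f)
    (h1 : rle (Set.Icc a b) (Set.Icc c d)) (h2 : rle (Set.Icc c d) (Set.Icc e f)) :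
    rle (Set.Icc a b) (Set.Icc e f) := by
  have k1 := rle_coords hab hcd h1
  have k2 := rle_coords hcd hef h2
  have hint : (Set.Icc a b ∩ Set.Icc e f).Nonempty := by
    have j1 := hab.1; have j2 := hab.2; have j3 := hcd.1; have j4 := hcd.2
    have j5 := hef.1; have j6 := hef.2
    refine ⟨(e.1, a.2), ?_, ?_⟩ <;> rw [mem_Icc_pt] <;> dsimp only <;>
      refine ⟨⟨?_, ?_⟩, ?_, ?_⟩ <;>
      linarith [k1.1, k1.2.1, k1.2.2.1, k1.2.2.2, k2.1, k2.2.1, k2.2.2.1, k2.2.2.2]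
  exact rle_of_coords hab hef hint (by linarith [k1.1, k2.1]) (by linarith [k1.2.1, k2.2.1])
    (by linarith [k1.2.2.1, k2.2.2.1]) (by linarith [k1.2.2.2, k2.2.2.2])

/-! ### Support rectangles are pairwise comparable when they intersect -/

lemma comp_aux {A B : Finset Pt} {Z : Set Pt} (hst : Standing A B Z)
    {C : Finset Rect} (hC : ↑C = brf A B Z) {P : Set (Rect → ℝ)}
    (hP : P = {x | x ∈ QSTAB (A ∪ B).card C ∧ ∑ R ∈ C, x R = misLP (A ∪ B).card C})
    {x : Rect → ℝ} (hxP : x ∈ P)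
    (hmin : ∀ y ∈ P, ∑ R ∈ C, rectArea R * x R ≤ ∑ R ∈ C, rectArea R * y R)
    {a b c d : Pt} (ha : a ∈ A) (hb : b ∈ B) (hc : c ∈ A) (hd : d ∈ B)
    (hab : a ≤ b) (hcd : c ≤ d)
    (hR : Set.Icc a b ∈ C) (hS : Set.Icc c d ∈ C)
    (hxR : 0 < x (Set.Icc a b)) (hxS : 0 < x (Set.Icc c d))
    (hne : Set.Icc a b ≠ Set.Icc c d)
    (hint : (Set.Icc a b ∩ Set.Icc c d).Nonempty)
    (hle : a.1 ≤ c.1) :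
    rle (Set.Icc a b) (Set.Icc c d) ∨ rle (Set.Icc c d) (Set.Icc a b) := by
  -- basic strict inequalities
  have haA : a ∈ A ∪ B := Finset.mem_union_left _ ha
  have hbB : b ∈ A ∪ B := Finset.mem_union_right _ hb
  have hcA : c ∈ A ∪ B := Finset.mem_union_left _ hc
  have hdB : d ∈ A ∪ B := Finset.mem_union_right _ hd
  have hsab := stand_strict hst ha hb hab
  have hscd := stand_strict hst hc hd hcd
  obtain ⟨w, hw1, hw2⟩ := hint
  rw [mem_Icc_pt] at hw1 hw2
  have hadne : a ≠ d := stand_ne_pts hst ha hd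
  have hcbne : c ≠ b := stand_ne_pts hst hc hb
  have had1 : a.1 < d.1 :=
    lt_of_le_of_ne (by linarith [hw1.1.1, hw2.2.1]) (ne_coord1 hst haA hdB hadne).1
  have had2 : a.2 < d.2 :=
    lt_of_le_of_ne (by linarith [hw1.1.2, hw2.2.2]) (ne_coord1 hst haA hdB hadne).2
  have hcb1 : c.1 < b.1 :=
    lt_of_le_of_ne (by linarith [hw2.1.1, hw1.2.1]) (ne_coord1 hst hcA hbB hcbne).1
  have hcb2 : c.2 < b.2 :=
    lt_of_le_of_ne (by linarith [hw2.1.2, hw1.2.2]) (ne_coord1 hst hcA hbB hcbne).2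
  have hintS : (Set.Icc c d ∩ Set.Icc a b).Nonempty := by
    rw [Set.inter_comm]; exact ⟨w, Set.mem_inter (mem_Icc_pt.mpr hw1) (mem_Icc_pt.mpr hw2)⟩
  have hintR : (Set.Icc a b ∩ Set.Icc c d).Nonempty := by
    rw [Set.inter_comm] at hintS; exact hintS
  -- a sub-rectangle of `Icc a b` kills minimality
  have exchR : ∀ u v : Pt, u ∈ A → v ∈ B → u ≤ v → Set.Icc u v ⊆ Set.Icc a b →
      Set.Icc u v ≠ Set.Icc a b → False := by
    intro u v hu hv huv hsub hne'
    have hZR : Set.Icc a b ⊆ Z := by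
      have : Set.Icc a b ∈ brf A B Z := by rw [← hC]; exact hR
      obtain ⟨a', _, b', _, _, hZ, heq⟩ := this
      rw [heq]; exact hZ
    have hT : Set.Icc u v ∈ C := by
      rw [← Finset.mem_coe, hC]
      exact ⟨u, hu, v, hv, huv, hsub.trans hZR, rfl⟩
    exact min_exchange hst hC hP hxP hmin hR hS hT hne hxR hxS hsub
      (area_proper_lt hst hu hv ha hb huv hab hsub hne')
  have exchS : ∀ u v : Pt, u ∈ A → v ∈ B → u ≤ v → Set.Icc u v ⊆ Set.Icc c d →
      Set.Icc u v ≠ Set.Icc c d → False := by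
    intro u v hu hv huv hsub hne'
    have hZS : Set.Icc c d ⊆ Z := by
      have : Set.Icc c d ∈ brf A B Z := by rw [← hC]; exact hS
      obtain ⟨a', _, b', _, _, hZ, heq⟩ := this
      rw [heq]; exact hZ
    have hT : Set.Icc u v ∈ C := by
      rw [← Finset.mem_coe, hC]
      exact ⟨u, hu, v, hv, huv, hsub.trans hZS, rfl⟩
    exact min_exchange hst hC hP hxP hmin hS hR hT (Ne.symm hne) hxS hxR hsub
      (area_proper_lt hst hu hv hc hd huv hcd hsub hne')
  -- coordinate equality transfer
  have hiccne : ∀ u v : Pt, u ≠ v → (u.1 ≠ v.1 ∧ u.2 ≠ v.2) → True := fun _ _ _ _ => trivial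
  rcases eq_or_lt_of_le hle with heq1 | hlt1
  · -- a = c
    have hac : a = c := stand_coord1 hst haA hcA heq1
    rcases lt_trichotomy b.1 d.1 with hbd1 | hbd1 | hbd1
    · have hbd : b ≠ d := fun h => absurd (h ▸ hbd1) (lt_irrefl _)
      have hbd2 : b.2 ≠ d.2 := (ne_coord1 hst hbB hdB hbd).2
      rcases lt_or_gt_of_ne hbd2 with h2 | h2
      · -- R ⊆ S properly
        exact (exchS a b ha hb hab
          ((icc_subset_pt hab).mpr ⟨⟨hac ▸ le_refl _, hac ▸ le_refl _⟩, hbd1.le, h2.le⟩)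
          hne).elim
      · -- le S R
        exact Or.inr (rle_of_coords hcd hab hintS (hac ▸ le_refl _) hbd1.le
          (hac ▸ le_refl _) h2.le)
    · have : b = d := stand_coord1 hst hbB hdB hbd1
      exact absurd (by rw [hac, this]) hne
    · have hbd : b ≠ d := fun h => absurd (h ▸ hbd1) (lt_irrefl _)
      have hbd2 : b.2 ≠ d.2 := (ne_coord1 hst hbB hdB hbd).2
      rcases lt_or_gt_of_ne hbd2 with h2 | h2
      · -- le R S
        exact Or.inl (rle_of_coords hab hcd hintR (hac ▸ le_refl _) hbd1.le
          (hac ▸ le_refl _) h2.le)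
      · -- S ⊆ R properly
        exact (exchR c d hc hd hcd
          ((icc_subset_pt hcd).mpr ⟨⟨hac ▸ le_refl _, hac ▸ le_refl _⟩, hbd1.le, h2.le⟩)
          (Ne.symm hne)).elim
  · -- a.1 < c.1, hence a ≠ c and a.2 ≠ c.2
    have hacne : a ≠ c := fun h => absurd (h ▸ hlt1) (lt_irrefl _)
    have hac2 : a.2 ≠ c.2 := (ne_coord1 hst haA hcA hacne).2
    rcases lt_trichotomy b.1 d.1 with hbd1 | hbd1 | hbd1
    · -- x-cross type L : a1 < c1 < b1 < d1
      have hbd : b ≠ d := fun h => absurd (h ▸ hbd1) (lt_irrefl _)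
      have hbd2 : b.2 ≠ d.2 := (ne_coord1 hst hbB hdB hbd).2
      rcases lt_or_gt_of_ne hac2 with ha2 | ha2
      · -- a2 < c2 : Icc c b is a proper subrectangle of Icc a b
        have hcble : c ≤ b := ⟨hcb1.le, hcb2.le⟩
        exact (exchR c b hc hb hcble
          ((icc_subset_pt hcble).mpr ⟨⟨hlt1.le, ha2.le⟩, le_refl _, le_refl _⟩)
          (fun h => hacne ((icc_corner_eq hcble hab h).1).symm)).elim
      · rcases lt_or_gt_of_ne hbd2 with h2 | h2
        · -- c2 < a2, b2 < d2 : Icc c b proper subrectangle of Icc c d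
          have hcble : c ≤ b := ⟨hcb1.le, hcb2.le⟩
          exact (exchS c b hc hb hcble
            ((icc_subset_pt hcble).mpr ⟨⟨le_refl _, le_refl _⟩, hbd1.le, h2.le⟩)
            (fun h => hbd (icc_corner_eq hcble hcd h).2)).elim
        · -- genuine cross
          exact (cross_exchange hst hC hP hxP hmin ha hb hc hd hab hcd hR hS
            hlt1 hcb1 hbd1 ha2 had2 h2 hxR hxS).elim
    · -- b = d
      have hbd : b = d := stand_coord1 hst hbB hdB hbd1
      rcases lt_or_gt_of_ne hac2 with ha2 | ha2
      · -- S ⊆ R properly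
        exact (exchR c d hc hd hcd
          ((icc_subset_pt hcd).mpr ⟨⟨hlt1.le, ha2.le⟩, hbd ▸ le_refl _, hbd ▸ le_refl _⟩)
          (fun h => hacne ((icc_corner_eq hcd hab h).1).symm)).elim
      · -- le R S
        exact Or.inl (rle_of_coords hab hcd hintR hlt1.le (hbd ▸ le_refl _) ha2.le
          (hbd ▸ le_refl _))
    · -- d1 < b1 : x(S) strictly inside x(R)
      rcases lt_or_gt_of_ne hac2 with ha2 | ha2
      · -- a2 < c2
        rcases lt_trichotomy b.2 d.2 with h2 | h2 | h2
        · -- y-cross L : Icc c b proper subrectangle of Icc a b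
          have hcble : c ≤ b := ⟨hcb1.le, hcb2.le⟩
          exact (exchR c b hc hb hcble
            ((icc_subset_pt hcble).mpr ⟨⟨hlt1.le, ha2.le⟩, le_refl _, le_refl _⟩)
            (fun h => hacne ((icc_corner_eq hcble hab h).1).symm)).elim
        · exact absurd (stand_coord2 hst hbB hdB h2 ▸ hbd1) (lt_irrefl _)
        · -- S ⊆ R properly
          exact (exchR c d hc hd hcd
            ((icc_subset_pt hcd).mpr ⟨⟨hlt1.le, ha2.le⟩, hbd1.le, h2.le⟩)
            (fun h => hacne ((icc_corner_eq hcd hab h).1).symm)).elim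
      · -- c2 < a2
        rcases lt_trichotomy b.2 d.2 with h2 | h2 | h2
        · -- le R S
          exact Or.inl (rle_of_coords hab hcd hintR hlt1.le hbd1.le ha2.le h2.le)
        · exact absurd (stand_coord2 hst hbB hdB h2 ▸ hbd1) (lt_irrefl _)
        · -- y-cross R with x(S) ⊆ x(R) : Icc a d proper subrectangle of Icc a b
          have hadle : a ≤ d := ⟨had1.le, had2.le⟩
          exact (exchR a d ha hd hadle
            ((icc_subset_pt hadle).mpr ⟨⟨le_refl _, le_refl _⟩, hbd1.le, h2.le⟩)
            (fun h => absurd ((icc_corner_eq hadle hab h).2 ▸ hbd1) (lt_irrefl _))).elim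

lemma comp_full {A B : Finset Pt} {Z : Set Pt} (hst : Standing A B Z)
    {C : Finset Rect} (hC : ↑C = brf A B Z) {P : Set (Rect → ℝ)}
    (hP : P = {x | x ∈ QSTAB (A ∪ B).card C ∧ ∑ R ∈ C, x R = misLP (A ∪ B).card C})
    {x : Rect → ℝ} (hxP : x ∈ P)
    (hmin : ∀ y ∈ P, ∑ R ∈ C, rectArea R * x R ≤ ∑ R ∈ C, rectArea R * y R)
    {R S : Rect} (hR : R ∈ C) (hS : S ∈ C)
    (hxR : 0 < x R) (hxS : 0 < x S) (hne : R ≠ S) (hint : (R ∩ S).Nonempty) :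
    rle R S ∨ rle S R := by
  have hRb : R ∈ brf A B Z := by rw [← hC]; exact hR
  have hSb : S ∈ brf A B Z := by rw [← hC]; exact hS
  obtain ⟨a, ha, b, hb, hab, hZR, rfl⟩ := hRb
  obtain ⟨c, hc, d, hd, hcd, hZS, rfl⟩ := hSb
  rcases le_total a.1 c.1 with h | h
  · exact comp_aux hst hC hP hxP hmin ha hb hc hd hab hcd hR hS hxR hxS hne hint h
  · have := comp_aux hst hC hP hxP hmin hc hd ha hb hcd hab hS hR hxS hxR (Ne.symm hne)
      (by rwa [Set.inter_comm]) h
    exact this.symm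

lemma mem_iff_corners {A B : Finset Pt} {Z : Set Pt} (hst : Standing A B Z)
    {R : Rect} (hR : R ∈ brf A B Z) (z : Pt) :
    z ∈ R ↔ blCorner R ≤ z ∧ z ≤ trCorner R := by
  have h := (brf_corners hst hR).2.2.2.1
  rw [show (z ∈ R ↔ blCorner R ≤ z ∧ z ≤ trCorner R) =
    (z ∈ Set.Icc (blCorner R) (trCorner R) ↔ blCorner R ≤ z ∧ z ≤ trCorner R) by rw [← h]]
  exact Set.mem_Icc

lemma chain_grid {A B : Finset Pt} {Z : Set Pt} (hst : Standing A B Z)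
    {C : Finset Rect} (hC : ↑C = brf A B Z)
    {W : Finset Rect} (hWC : ∀ R ∈ W, R ∈ C) (hWne : W.Nonempty)
    (hchain : ∀ R ∈ W, ∀ S ∈ W, rle R S ∨ rle S R) :
    ∃ i j : ℤ, 1 ≤ i ∧ i ≤ ((A ∪ B).card : ℤ) ∧ 1 ≤ j ∧ j ≤ ((A ∪ B).card : ℤ) ∧
      ∀ R ∈ W, ((i : ℝ), (j : ℝ)) ∈ R := by
  have hWb : ∀ R ∈ W, R ∈ brf A B Z := by
    intro R hRW; rw [← hC]; exact_mod_cast hWC R hRW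
  obtain ⟨R1, hR1W, hq1⟩ := Finset.exists_mem_eq_sup' hWne (fun R => (blCorner R).1)
  obtain ⟨R2, hR2W, hq2⟩ := Finset.exists_mem_eq_sup' hWne (fun R => (blCorner R).2)
  have hd1 := brf_corners hst (hWb R1 hR1W)
  have hd2 := brf_corners hst (hWb R2 hR2W)
  obtain ⟨i1, j1, hi11, hi12, _, _, hp1⟩ :=
    hst.2.2.1 (blCorner R1) (Finset.mem_union_left _ hd1.1)
  obtain ⟨i2, j2, _, _, hj21, hj22, hp2⟩ :=
    hst.2.2.1 (blCorner R2) (Finset.mem_union_left _ hd2.1)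
  refine ⟨i1, j2, hi11, hi12, hj21, hj22, ?_⟩
  intro R hRW
  have hdR := brf_corners hst (hWb R hRW)
  rw [mem_iff_corners hst (hWb R hRW)]
  have e1 : (i1 : ℝ) = (blCorner R1).1 := by rw [hp1]
  have e2 : (j2 : ℝ) = (blCorner R2).2 := by rw [hp2]
  have upper : ∀ S ∈ W, ∀ T ∈ W, (blCorner S).1 ≤ (trCorner T).1 ∧
      (blCorner S).2 ≤ (trCorner T).2 := by
    intro S hSW T hTW
    rcases hchain S hSW T hTW with h | h
    · rcases h with heq | ⟨⟨w, hw1, hw2⟩, _, _⟩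
      · rw [heq]
        have := (brf_corners hst (hWb T hTW)).2.2.1
        exact ⟨this.1, this.2⟩
      · have k1 := ((mem_iff_corners hst (hWb S hSW) w).mp hw1).1
        have k2 := ((mem_iff_corners hst (hWb T hTW) w).mp hw2).2
        exact ⟨le_trans k1.1 k2.1, le_trans k1.2 k2.2⟩
    · rcases h with heq | ⟨⟨w, hw1, hw2⟩, _, _⟩
      · rw [← heq]
        have := (brf_corners hst (hWb T hTW)).2.2.1
        exact ⟨this.1, this.2⟩
      · have k1 := ((mem_iff_corners hst (hWb S hSW) w).mp hw2).1
        have k2 := ((mem_iff_corners hst (hWb T hTW) w).mp hw1).2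
        exact ⟨le_trans k1.1 k2.1, le_trans k1.2 k2.2⟩
  constructor
  · constructor
    · dsimp only
      rw [e1, ← hq1]
      exact Finset.le_sup' (fun R => (blCorner R).1) hRW
    · dsimp only
      rw [e2, ← hq2]
      exact Finset.le_sup' (fun R => (blCorner R).2) hRW
  · constructor
    · dsimp only
      rw [e1]
      exact (upper R1 hR1W R hRW).1
    · dsimp only
      rw [e2]
      exact (upper R2 hR2W R hRW).2

/-! ### Integrality of extreme points supported on a chain-comparable family -/

lemma chain_max_exists (F : Finset Rect) (pre : Rect → Rect → Prop)
    (hrefl : ∀ R ∈ F, pre R R)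
    (htrans : ∀ R ∈ F, ∀ S ∈ F, ∀ T ∈ F, pre R S → pre S T → pre R T) :
    ∀ k (W : Finset Rect), W.card ≤ k → W ⊆ F → W.Nonempty →
      (∀ u ∈ W, ∀ w ∈ W, pre u w ∨ pre w u) → ∃ u ∈ W, ∀ w ∈ W, pre w u := by
  intro k
  induction k with
  | zero =>
    intro W hcard hWF hWne _
    obtain ⟨v, hv⟩ := hWne
    exact absurd (Finset.card_eq_zero.mp (Nat.le_zero.mp hcard) ▸ hv) (Finset.notMem_empty v)
  | succ k ih =>
    intro W hcard hWF hWne hch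
    obtain ⟨v, hv⟩ := hWne
    set W' := W.erase v with hW'
    rcases W'.eq_empty_or_nonempty with hE | hW'ne
    · refine ⟨v, hv, ?_⟩
      intro w hw
      rcases eq_or_ne w v with rfl | hne
      · exact hrefl w (hWF hw)
      · exact absurd (hE ▸ (show w ∈ W' from Finset.mem_erase.mpr ⟨hne, hw⟩)) (Finset.notMem_empty w)
    · have hcard' : W'.card ≤ k := by
        rw [hW', Finset.card_erase_of_mem hv]
        omega
      obtain ⟨u, huW', hu⟩ := ih W' hcard' (fun w hw => hWF (Finset.mem_of_mem_erase hw))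
        hW'ne (fun a ha b hb =>
          hch a (Finset.mem_of_mem_erase ha) b (Finset.mem_of_mem_erase hb))
      have huW : u ∈ W := Finset.mem_of_mem_erase huW'
      rcases hch v hv u huW with h | h
      · refine ⟨u, huW, ?_⟩
        intro w hw
        rcases eq_or_ne w v with rfl | hne
        · exact h
        · exact hu w (Finset.mem_erase.mpr ⟨hne, hw⟩)
      · refine ⟨v, hv, ?_⟩
        intro w hw
        rcases eq_or_ne w v with rfl | hne
        · exact hrefl w (hWF hw)
        · exact htrans w (hWF hw) u (hWF huW) v (hWF hv)
            (hu w (Finset.mem_erase.mpr ⟨hne, hw⟩)) h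

set_option maxHeartbeats 2000000 in
lemma chain_integral (n : ℕ) (C : Finset Rect) (x : Rect → ℝ)
    (hxQ : x ∈ QSTAB n C) (hext : x ∈ Set.extremePoints ℝ (QSTAB n C))
    (pre : Rect → Rect → Prop)
    (hrefl : ∀ R ∈ C.filter (fun R => 0 < x R), pre R R)
    (htrans : ∀ R ∈ C.filter (fun R => 0 < x R), ∀ S ∈ C.filter (fun R => 0 < x R),
      ∀ T ∈ C.filter (fun R => 0 < x R), pre R S → pre S T → pre R T)
    (hanti : ∀ R ∈ C.filter (fun R => 0 < x R), ∀ S ∈ C.filter (fun R => 0 < x R),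
      pre R S → pre S R → R = S)
    (hcomp : ∀ R ∈ C.filter (fun R => 0 < x R), ∀ S ∈ C.filter (fun R => 0 < x R),
      (R ∩ S).Nonempty → pre R S ∨ pre S R)
    (hchainpt : ∀ W : Finset Rect, W ⊆ C.filter (fun R => 0 < x R) → W.Nonempty →
      (∀ R ∈ W, ∀ S ∈ W, pre R S ∨ pre S R) →
      ∃ i j : ℤ, 1 ≤ i ∧ i ≤ (n : ℤ) ∧ 1 ≤ j ∧ j ≤ (n : ℤ) ∧
        ∀ R ∈ W, ((i : ℝ), (j : ℝ)) ∈ R) :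
    ∀ R ∈ C.filter (fun R => 0 < x R), x R = 1 := by
  set F := C.filter (fun R => 0 < x R) with hF
  intro R0 hR0
  have hFne : F.Nonempty := ⟨R0, hR0⟩
  have hxpos : ∀ R ∈ F, 0 < x R := fun R hR => (Finset.mem_filter.mp hR).2
  have hFC : F ⊆ C := Finset.filter_subset _ _
  have hzero : ∀ R ∈ C, R ∉ F → x R = 0 := by
    intro R hRC hRF
    by_contra h
    exact hRF (Finset.mem_filter.mpr ⟨hRC, lt_of_le_of_ne (hxQ.1 R) (Ne.symm h)⟩)
  -- chains ending at v
  obtain ⟨Ch, hCh⟩ : ∃ Ch : Rect → Finset (Finset Rect), Ch = fun v => F.powerset.filter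
      (fun T => v ∈ T ∧ (∀ u ∈ T, pre u v) ∧ ∀ u ∈ T, ∀ w ∈ T, pre u w ∨ pre w u) :=
    ⟨_, rfl⟩
  have hChmem : ∀ v T, T ∈ Ch v ↔ (T ⊆ F ∧ v ∈ T ∧ (∀ u ∈ T, pre u v) ∧
      ∀ u ∈ T, ∀ w ∈ T, pre u w ∨ pre w u) := by
    intro v T
    simp only [hCh, Finset.mem_filter, Finset.mem_powerset]
  have hChne : ∀ v ∈ F, (Ch v).Nonempty := by
    intro v hv
    refine ⟨{v}, (hChmem v {v}).mpr ⟨?_, Finset.mem_singleton_self v, ?_, ?_⟩⟩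
    · simp [hv]
    · intro u hu; rw [Finset.mem_singleton] at hu; subst hu; exact hrefl _ hv
    · intro u hu w hw
      rw [Finset.mem_singleton] at hu hw; subst hu; subst hw
      exact Or.inl (hrefl _ hv)
  obtain ⟨g, hg⟩ : ∃ g : Rect → ℝ, g = fun v => if h : (Ch v).Nonempty then
      (Ch v).sup' h (fun T => ∑ u ∈ T, x u) else 0 := ⟨_, rfl⟩
  have hgv : ∀ v (hv : v ∈ F), g v = (Ch v).sup' (hChne v hv) (fun T => ∑ u ∈ T, x u) := by
    intro v hv
    simp only [hg, dif_pos (hChne v hv)]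
  have hchain_sum : ∀ T : Finset Rect, T ⊆ F →
      (∀ u ∈ T, ∀ w ∈ T, pre u w ∨ pre w u) → ∑ u ∈ T, x u ≤ 1 := by
    intro T hTF hTch
    rcases T.eq_empty_or_nonempty with rfl | hTne
    · simp
    · obtain ⟨i, j, hi1, hi2, hj1, hj2, hmem⟩ := hchainpt T hTF hTne hTch
      refine le_trans (Finset.sum_le_sum_of_subset_of_nonneg ?_
        (fun U _ _ => hxQ.1 U)) (hxQ.2.2 i j hi1 hi2 hj1 hj2)
      intro U hU
      exact Finset.mem_filter.mpr ⟨hFC (hTF hU), hmem U hU⟩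
  have hg_le_one : ∀ v ∈ F, g v ≤ 1 := by
    intro v hv
    rw [hgv v hv]
    apply Finset.sup'_le
    intro T hT
    obtain ⟨hTF, _, _, hTch⟩ := (hChmem v T).mp hT
    exact hchain_sum T hTF hTch
  have hg_ge : ∀ v ∈ F, x v ≤ g v := by
    intro v hv
    rw [hgv v hv]
    have hsing : {v} ∈ Ch v := by
      refine (hChmem v {v}).mpr ⟨by simp [hv], Finset.mem_singleton_self v, ?_, ?_⟩
      · intro u hu; rw [Finset.mem_singleton] at hu; subst hu; exact hrefl _ hv
      · intro u hu w hw
        rw [Finset.mem_singleton] at hu hw; subst hu; subst hw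
        exact Or.inl (hrefl _ hv)
    have := Finset.le_sup' (fun T => ∑ u ∈ T, x u) hsing
    simpa only [Finset.sum_singleton] using this
  -- strict predecessors
  obtain ⟨Pv, hPvdef⟩ : ∃ Pv : Rect → Finset Rect,
      Pv = fun v => F.filter (fun u => pre u v ∧ u ≠ v) := ⟨_, rfl⟩
  have hPv : ∀ v u, u ∈ Pv v ↔ (u ∈ F ∧ pre u v ∧ u ≠ v) := by
    intro v u
    rw [hPvdef]
    simp [Finset.mem_filter, and_assoc]
  obtain ⟨m, hm⟩ : ∃ m : Rect → ℝ, m = fun v =>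
      if h : (Pv v).Nonempty then max 0 ((Pv v).sup' h g) else 0 := ⟨_, rfl⟩
  have hm_nonneg : ∀ v, 0 ≤ m v := by
    intro v
    simp only [hm]
    split
    · exact le_max_left _ _
    · exact le_refl _
  have hm_ge : ∀ v, ∀ u ∈ Pv v, g u ≤ m v := by
    intro v u hu
    have hne : (Pv v).Nonempty := ⟨u, hu⟩
    simp only [hm, dif_pos hne]
    exact le_trans (Finset.le_sup' g hu) (le_max_right _ _)
  have hm_rep : ∀ v, m v = 0 ∨ ∃ u ∈ Pv v, m v = g u := by
    intro v
    simp only [hm]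
    split
    · rename_i h
      rcases le_total ((Pv v).sup' h g) 0 with h1 | h1
      · exact Or.inl (max_eq_left h1)
      · obtain ⟨u, hu, he⟩ := Finset.exists_mem_eq_sup' h g
        exact Or.inr ⟨u, hu, by rw [max_eq_right h1, he]⟩
    · exact Or.inl rfl
  have grec : ∀ v ∈ F, g v = x v + m v := by
    intro v hv
    apply le_antisymm
    · rw [hgv v hv]
      apply Finset.sup'_le
      intro T hT
      obtain ⟨hTF, hvT, hTle, hTch⟩ := (hChmem v T).mp hT
      have hsplit : ∑ u ∈ T.erase v, x u + x v = ∑ u ∈ T, x u :=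
        Finset.sum_erase_add T x hvT
      rcases (T.erase v).eq_empty_or_nonempty with hE | hTne'
      · rw [← hsplit, hE]
        simp [hm_nonneg v]
      · obtain ⟨u, huT', hu⟩ := chain_max_exists F pre hrefl htrans (T.erase v).card
          (T.erase v) (le_refl _) (fun w hw => hTF (Finset.mem_of_mem_erase hw)) hTne'
          (fun a ha b hb => hTch a (Finset.mem_of_mem_erase ha) b
            (Finset.mem_of_mem_erase hb))
        have huF : u ∈ F := hTF (Finset.mem_of_mem_erase huT')
        have hTu : T.erase v ∈ Ch u := by
          refine (hChmem u _).mpr ⟨fun w hw => hTF (Finset.mem_of_mem_erase hw),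
            huT', hu, ?_⟩
          exact fun a ha b hb => hTch a (Finset.mem_of_mem_erase ha) b
            (Finset.mem_of_mem_erase hb)
        have h1 : ∑ w ∈ T.erase v, x w ≤ g u := by
          rw [hgv u huF]
          exact Finset.le_sup' (fun T => ∑ w ∈ T, x w) hTu
        have h2 : g u ≤ m v := hm_ge v u ((hPv v u).mpr ⟨huF,
          hTle u (Finset.mem_of_mem_erase huT'), (Finset.mem_erase.mp huT').1⟩)
        linarith [hsplit]
    · rcases hm_rep v with h0 | ⟨u, hu, he⟩
      · rw [h0, add_zero]
        exact hg_ge v hv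
      · obtain ⟨huF, hpuv, hunv⟩ := (hPv v u).mp hu
        have := hgv u huF
        obtain ⟨T, hT, hTeq⟩ := Finset.exists_mem_eq_sup' (hChne u huF)
          (fun T => ∑ w ∈ T, x w)
        obtain ⟨hTF, huT, hTle, hTch⟩ := (hChmem u T).mp hT
        have hvT : v ∉ T := by
          intro hvT
          exact hunv (hanti u huF v hv hpuv (hTle v hvT))
        have hTv : insert v T ∈ Ch v := by
          refine (hChmem v _).mpr ⟨?_, Finset.mem_insert_self v T, ?_, ?_⟩
          · intro w hw
            rcases Finset.mem_insert.mp hw with rfl | hw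
            · exact hv
            · exact hTF hw
          · intro w hw
            rcases Finset.mem_insert.mp hw with rfl | hw
            · exact hrefl w hv
            · exact htrans w (hTF hw) u huF v hv (hTle w hw) hpuv
          · intro a ha b hb
            rcases Finset.mem_insert.mp ha with ha' | ha' <;>
              rcases Finset.mem_insert.mp hb with hb' | hb'
            · subst ha'; subst hb'; exact Or.inl (hrefl _ hv)
            · subst ha'; exact Or.inr (htrans b (hTF hb') u huF _ hv (hTle b hb') hpuv)
            · subst hb'; exact Or.inl (htrans a (hTF ha') u huF _ hv (hTle a ha') hpuv)
            · exact hTch a ha' b hb'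
        have h1 : ∑ w ∈ insert v T, x w ≤ g v := by
          rw [hgv v hv]
          exact Finset.le_sup' (fun T => ∑ w ∈ T, x w) hTv
        rw [Finset.sum_insert hvT] at h1
        rw [this, hTeq] at he
        rw [he]
        linarith
  have hm_le_g : ∀ v ∈ F, m v ≤ g v := by
    intro v hv
    have := grec v hv
    have := hxpos v hv
    linarith
  have hg_nonneg : ∀ v ∈ F, 0 ≤ g v := fun v hv => le_trans (hxpos v hv).le (hg_ge v hv)
  -- the perturbation construction
  have hμ0 : 0 < F.inf' hFne x := by
    rw [Finset.lt_inf'_iff]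
    exact hxpos
  obtain ⟨V, hV⟩ : ∃ V : Finset ℝ, V = insert 0 (insert 1 (F.image g)) := ⟨_, rfl⟩
  have h0V : (0 : ℝ) ∈ V := by rw [hV]; exact Finset.mem_insert_self _ _
  have h1V : (1 : ℝ) ∈ V := by simp [hV]
  have hgV : ∀ v ∈ F, g v ∈ V := by
    intro v hv
    simp only [hV, Finset.mem_insert]
    exact Or.inr (Or.inr (Finset.mem_image_of_mem g hv))
  have hmV : ∀ v ∈ F, m v ∈ V := by
    intro v hv
    rcases hm_rep v with h | ⟨u, hu, he⟩
    · rw [h]; exact h0V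
    · rw [he]; exact hgV u ((hPv _ u).mp hu).1
  obtain ⟨VP, hVP⟩ : ∃ VP : Finset (ℝ × ℝ), VP = (V ×ˢ V).filter (fun p => p.1 < p.2) :=
    ⟨_, rfl⟩
  have hVPne : VP.Nonempty := by
    refine ⟨((0 : ℝ), (1 : ℝ)), ?_⟩
    simp only [hVP, Finset.mem_filter, Finset.mem_product]
    exact ⟨⟨h0V, h1V⟩, by norm_num⟩
  obtain ⟨δ, hδ⟩ : ∃ d : ℝ, d = VP.inf' hVPne (fun p => p.2 - p.1) := ⟨_, rfl⟩
  have hδ0 : 0 < δ := by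
    rw [hδ, Finset.lt_inf'_iff]
    rintro ⟨s, t⟩ hp
    simp only [hVP, Finset.mem_filter, Finset.mem_product] at hp
    simpa using sub_pos.mpr hp.2
  have hgap : ∀ s ∈ V, ∀ t ∈ V, s < t → δ ≤ t - s := by
    intro s hs t ht hlt
    have hm : (s, t) ∈ VP := by
      simp only [hVP, Finset.mem_filter, Finset.mem_product]
      exact ⟨⟨hs, ht⟩, hlt⟩
    rw [hδ]
    exact Finset.inf'_le (fun p => p.2 - p.1) hm
  obtain ⟨ε, hε⟩ : ∃ e : ℝ, e = min (δ / 4) (F.inf' hFne x / 2) := ⟨_, rfl⟩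
  have hε0 : 0 < ε := by rw [hε]; exact lt_min (by linarith) (by linarith)
  have hεδ : ε ≤ δ / 4 := by rw [hε]; exact min_le_left _ _
  have hεμ : ε ≤ F.inf' hFne x / 2 := by rw [hε]; exact min_le_right _ _
  obtain ⟨ind, hind⟩ : ∃ f : ℝ → ℝ, f = fun t => if 0 < t ∧ t < 1 then 1 else 0 := ⟨_, rfl⟩
  have hind01 : ∀ t, ind t = 0 ∨ ind t = 1 := by
    intro t; simp only [hind]; split
    · exact Or.inr rfl
    · exact Or.inl rfl
  obtain ⟨pe, hpe⟩ : ∃ f : ℝ → ℝ → ℝ, f = fun s t => t + ε * s * ind t := ⟨_, rfl⟩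
  have hmono : ∀ s : ℝ, (s = 1 ∨ s = -1) → ∀ t1 ∈ V, ∀ t2 ∈ V, t1 ≤ t2 →
      pe s t1 ≤ pe s t2 := by
    intro s hs t1 h1 t2 h2 hle
    rcases eq_or_lt_of_le hle with rfl | hlt
    · exact le_refl _
    · have hg2 := hgap t1 h1 t2 h2 hlt
      rcases hind01 t1 with e1 | e1 <;> rcases hind01 t2 with e2 | e2 <;>
        rcases hs with rfl | rfl <;>
        simp only [hpe, e1, e2] <;> nlinarith
  have hrange : ∀ s : ℝ, (s = 1 ∨ s = -1) → ∀ t ∈ V, 0 ≤ t → t ≤ 1 →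
      0 ≤ pe s t ∧ pe s t ≤ 1 := by
    intro s hs t htV ht0 ht1
    by_cases hin : 0 < t ∧ t < 1
    · have g0 := hgap 0 h0V t htV hin.1
      have g1 := hgap t htV 1 h1V hin.2
      have : ind t = 1 := by simp only [hind, if_pos hin]
      rcases hs with rfl | rfl <;> simp only [hpe, this] <;> constructor <;> nlinarith
    · have : ind t = 0 := by simp only [hind, if_neg hin]
      rcases hs with rfl | rfl <;> simp only [hpe, this] <;> constructor <;> nlinarith
  obtain ⟨xe, hxe⟩ : ∃ f : ℝ → Rect → ℝ,
      f = fun s v => if v ∈ F then pe s (g v) - pe s (m v) else x v := ⟨_, rfl⟩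
  have hxeF : ∀ s : ℝ, ∀ v ∈ F, xe s v = x v + ε * s * (ind (g v) - ind (m v)) := by
    intro s v hv
    simp only [hxe, if_pos hv, hpe]
    linear_combination (grec v hv)
  have hfeas : ∀ s : ℝ, (s = 1 ∨ s = -1) → xe s ∈ QSTAB n C := by
    intro s hs
    refine ⟨?_, ?_, ?_⟩
    · intro v
      by_cases hv : v ∈ F
      · rw [hxeF s v hv]
        have hxv := Finset.inf'_le x hv
        rcases hind01 (g v) with e1 | e1 <;> rcases hind01 (m v) with e2 | e2 <;>
          rcases hs with rfl | rfl <;> rw [e1, e2] <;> nlinarith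
      · simp only [hxe, if_neg hv]; exact hxQ.1 v
    · intro v hvC
      have hvF : v ∉ F := fun h => hvC (hFC h)
      simp only [hxe, if_neg hvF]
      exact hxQ.2.1 v hvC
    · intro i j hi1 hi2 hj1 hj2
      set q : Pt := ((i : ℝ), (j : ℝ)) with hq
      set W := F.filter (fun R => q ∈ R) with hW
      have hWsub : W ⊆ C.filter (fun R => q ∈ R) := by
        intro U hU
        obtain ⟨hUF, hqU⟩ := Finset.mem_filter.mp hU
        exact Finset.mem_filter.mpr ⟨hFC hUF, hqU⟩
      have hWF : W ⊆ F := Finset.filter_subset _ _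
      have hsum_eq : ∑ U ∈ W, xe s U = ∑ U ∈ C.filter (fun R => q ∈ R), xe s U := by
        refine Finset.sum_subset hWsub ?_
        intro U hU hUW
        obtain ⟨hUC, hqU⟩ := Finset.mem_filter.mp hU
        have hUF : U ∉ F := by
          intro h
          exact hUW (Finset.mem_filter.mpr ⟨h, hqU⟩)
        simp only [hxe, if_neg hUF]
        exact hzero U hUC hUF
      have hWch : ∀ u ∈ W, ∀ w ∈ W, pre u w ∨ pre w u := by
        intro u hu w hw
        obtain ⟨huF, hqu⟩ := Finset.mem_filter.mp hu
        obtain ⟨hwF, hqw⟩ := Finset.mem_filter.mp hw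
        rcases eq_or_ne u w with rfl | hne
        · exact Or.inl (hrefl u huF)
        · exact hcomp u huF w hwF ⟨q, hqu, hqw⟩
      have htel : ∀ k (W' : Finset Rect), W'.card ≤ k → W' ⊆ F →
          (∀ u ∈ W', ∀ w ∈ W', pre u w ∨ pre w u) → ∀ u0 ∈ W',
          (∀ w ∈ W', pre w u0) → ∑ v ∈ W', xe s v ≤ pe s (g u0) := by
        intro k
        induction k with
        | zero =>
          intro W' hc hWF' _ u0 hu0 _
          exact absurd (Finset.card_eq_zero.mp (Nat.le_zero.mp hc) ▸ hu0)
            (Finset.notMem_empty u0)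
        | succ k ih =>
          intro W' hc hWF' hch u0 hu0 hmax
          have hu0F : u0 ∈ F := hWF' hu0
          have hsplit : ∑ v ∈ W'.erase u0, xe s v + xe s u0 = ∑ v ∈ W', xe s v :=
            Finset.sum_erase_add _ _ hu0
          have hxeu0 : xe s u0 = pe s (g u0) - pe s (m u0) := by
            simp only [hxe, if_pos hu0F]
          have hpm0 : 0 ≤ pe s (m u0) := (hrange s hs (m u0) (hmV u0 hu0F)
            (hm_nonneg u0) (le_trans (hm_le_g u0 hu0F) (hg_le_one u0 hu0F))).1
          rcases (W'.erase u0).eq_empty_or_nonempty with hE | hne'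
          · rw [← hsplit, hE]
            simp only [Finset.sum_empty, zero_add]
            linarith
          · obtain ⟨u1, hu1, hmax1⟩ := chain_max_exists F pre hrefl htrans
              (W'.erase u0).card _ le_rfl
              (fun w hw => hWF' (Finset.mem_of_mem_erase hw)) hne'
              (fun a ha b hb => hch a (Finset.mem_of_mem_erase ha) b
                (Finset.mem_of_mem_erase hb))
            have hu1W' := Finset.mem_of_mem_erase hu1
            have hu1F : u1 ∈ F := hWF' hu1W'
            have hcard' : (W'.erase u0).card ≤ k := by
              rw [Finset.card_erase_of_mem hu0]
              omega
            have hIH : ∑ v ∈ W'.erase u0, xe s v ≤ pe s (g u1) :=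
              ih (W'.erase u0) hcard'
                (fun w hw => hWF' (Finset.mem_of_mem_erase hw))
                (fun a ha b hb => hch a (Finset.mem_of_mem_erase ha) b
                  (Finset.mem_of_mem_erase hb)) u1 hu1 hmax1
            have hg1m : g u1 ≤ m u0 := hm_ge u0 u1 ((hPv u0 u1).mpr
              ⟨hu1F, hmax u1 hu1W', (Finset.mem_erase.mp hu1).1⟩)
            have hp : pe s (g u1) ≤ pe s (m u0) :=
              hmono s hs _ (hgV u1 hu1F) _ (hmV u0 hu0F) hg1m
            linarith
      rcases W.eq_empty_or_nonempty with hE | hWne'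
      · rw [← hsum_eq, hE]
        simp
      · obtain ⟨u0, hu0, hmax⟩ := chain_max_exists F pre hrefl htrans W.card W
          le_rfl hWF hWne' hWch
        have hu0F : u0 ∈ F := hWF hu0
        have h1 := htel W.card W le_rfl hWF hWch u0 hu0 hmax
        have h2 : pe s (g u0) ≤ 1 := (hrange s hs (g u0) (hgV u0 hu0F)
          (hg_nonneg u0 hu0F) (hg_le_one u0 hu0F)).2
        rw [← hsum_eq]
        linarith
  have hxeq : xe 1 = x := by
    have hseg : x ∈ openSegment ℝ (xe 1) (xe (-1)) := by
      refine ⟨1 / 2, 1 / 2, by norm_num, by norm_num, by norm_num, ?_⟩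
      funext v
      simp only [Pi.add_apply, Pi.smul_apply, smul_eq_mul]
      by_cases hv : v ∈ F
      · rw [hxeF 1 v hv, hxeF (-1) v hv]; ring
      · simp only [hxe, if_neg hv]; ring
    exact hext.2 (hfeas 1 (Or.inl rfl)) (hfeas (-1) (Or.inr rfl)) hseg
  have hindeq : ∀ v ∈ F, ind (g v) = ind (m v) := by
    intro v hv
    have h1 : xe 1 v = x v := by rw [hxeq]
    rw [hxeF 1 v hv] at h1
    have h2 : ε * (ind (g v) - ind (m v)) = 0 := by linarith
    rcases mul_eq_zero.mp h2 with h | h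
    · exact absurd h (ne_of_gt hε0)
    · linarith
  have hPmono : ∀ v ∈ F, ∀ u ∈ Pv v, (Pv u).card < (Pv v).card := by
    intro v hv u hu
    obtain ⟨huF, hpu, hne⟩ := (hPv v u).mp hu
    have hsub : Pv u ⊆ Pv v := by
      intro w hw
      obtain ⟨hwF, hpw, hwne⟩ := (hPv u w).mp hw
      refine (hPv v w).mpr ⟨hwF, htrans w hwF u huF v hv hpw hpu, ?_⟩
      intro hwv
      subst hwv
      exact hne (hanti u huF w hv hpu hpw)
    apply Finset.card_lt_card
    refine (Finset.ssubset_iff_of_subset hsub).mpr ⟨u, hu, ?_⟩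
    intro h
    exact ((hPv u u).mp h).2.2 rfl
  have hconc : ∀ v ∈ F, ind (m v) = 0 → g v = 1 := by
    intro v hv h0
    have hie := hindeq v hv
    rw [h0] at hie
    have hpos : 0 < g v := lt_of_lt_of_le (hxpos v hv) (hg_ge v hv)
    have hnc : ¬(0 < g v ∧ g v < 1) := by
      intro hcon
      simp only [hind, if_pos hcon] at hie
      norm_num at hie
    push_neg at hnc
    exact le_antisymm (hg_le_one v hv) (hnc hpos)
  have hgone : ∀ k, ∀ v ∈ F, (Pv v).card ≤ k → g v = 1 := by
    intro k
    induction k with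
    | zero =>
      intro v hv hc
      have hPe : Pv v = ∅ := Finset.card_eq_zero.mp (Nat.le_zero.mp hc)
      have hm0 : m v = 0 := by
        rcases hm_rep v with h | ⟨u, hu, _⟩
        · exact h
        · rw [hPe] at hu
          exact absurd hu (Finset.notMem_empty u)
      refine hconc v hv ?_
      rw [hm0]
      simp [hind]
    | succ k ih =>
      intro v hv hc
      have hm01 : ind (m v) = 0 := by
        rcases hm_rep v with h | ⟨u, hu, he⟩
        · rw [h]; simp [hind]
        · have huF : u ∈ F := ((hPv v u).mp hu).1
          have : (Pv u).card ≤ k := by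
            have := hPmono v hv u hu
            omega
          rw [he, ih u huF this]
          simp [hind]
      exact hconc v hv hm01
  have hgR0 : g R0 = 1 := hgone (Pv R0).card R0 hR0 le_rfl
  have hmR0 : m R0 = 0 := by
    rcases hm_rep R0 with h | ⟨u, hu, he⟩
    · exact h
    · have huF : u ∈ F := ((hPv R0 u).mp hu).1
      have hgu : g u = 1 := hgone (Pv R0).card u huF (hPmono R0 hR0 u hu).le
      -- then m R0 = 1 and x R0 = 0, contradiction
      exfalso
      have := grec R0 hR0
      rw [hgR0, he, hgu] at this
      exact absurd this.symm (by linarith [hxpos R0 hR0])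
  have := grec R0 hR0
  rw [hgR0, hmR0] at this
  linarith

/-! ### Wrappers for the order axioms on brf rectangles -/

lemma rle_trans_brf {A B : Finset Pt} {Z : Set Pt}
    {R S T : Rect} (hR : R ∈ brf A B Z) (hS : S ∈ brf A B Z) (hT : T ∈ brf A B Z)
    (h1 : rle R S) (h2 : rle S T) : rle R T := by
  obtain ⟨a, _, b, _, hab, _, rfl⟩ := hR
  obtain ⟨c, _, d, _, hcd, _, rfl⟩ := hS
  obtain ⟨e, _, f, _, hef, _, rfl⟩ := hT
  exact rle_trans hab hcd hef h1 h2

lemma rle_antisymm_brf {A B : Finset Pt} {Z : Set Pt}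
    {R S : Rect} (hR : R ∈ brf A B Z) (hS : S ∈ brf A B Z)
    (h1 : rle R S) (h2 : rle S R) : R = S := by
  obtain ⟨a, _, b, _, hab, _, rfl⟩ := hR
  obtain ⟨c, _, d, _, hcd, _, rfl⟩ := hS
  exact rle_antisymm hab hcd h1 h2

/-- Let x* be an extreme point of the optimal face
P = {x ∈ QSTAB(R) : Σ x_R = mis_LP(R)} minimizing the total weighted area. Then x* is
integral and its support is a maximum-cardinality independent set of R. -/
theorem area_minimizer_is_integral (A B : Finset Pt) (Z : Set Pt)
    (hst : Standing A B Z) (C : Finset Rect) (hC : ↑C = brf A B Z) (hne : C.Nonempty)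
    (P : Set (Rect → ℝ))
    (hP : P = {x | x ∈ QSTAB (A ∪ B).card C ∧ ∑ R ∈ C, x R = misLP (A ∪ B).card C})
    (x : Rect → ℝ) (hx : x ∈ Set.extremePoints ℝ P)
    (hmin : ∀ y ∈ P, ∑ R ∈ C, rectArea R * x R ≤ ∑ R ∈ C, rectArea R * y R) :
    (∀ R ∈ C, x R = 0 ∨ x R = 1) ∧
    IndepFamily {R : Rect | R ∈ C ∧ 0 < x R} ∧
    {R : Rect | R ∈ C ∧ 0 < x R} ⊆ brf A B Z ∧
    {R : Rect | R ∈ C ∧ 0 < x R}.ncard = mis (brf A B Z) := by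
  have hxP : x ∈ P := hx.1
  have hxP' : x ∈ QSTAB (A ∪ B).card C ∧ ∑ R ∈ C, x R = misLP (A ∪ B).card C := by
    rw [hP] at hxP; exact hxP
  obtain ⟨hxQ, hxsum⟩ := hxP'
  have hext : x ∈ Set.extremePoints ℝ (QSTAB (A ∪ B).card C) :=
    extreme_in_qstab hst hC hP hx
  have hxPm : x ∈ P := hx.1
  have hminP : ∀ y ∈ {x | x ∈ QSTAB (A ∪ B).card C ∧
      ∑ R ∈ C, x R = misLP (A ∪ B).card C},
      ∑ R ∈ C, rectArea R * x R ≤ ∑ R ∈ C, rectArea R * y R := by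
    rw [← hP]; exact hmin
  have hxPP : x ∈ {x | x ∈ QSTAB (A ∪ B).card C ∧
      ∑ R ∈ C, x R = misLP (A ∪ B).card C} := ⟨hxQ, hxsum⟩
  have hFC : C.filter (fun R => 0 < x R) ⊆ C := Finset.filter_subset _ _
  have hmemF : ∀ R, R ∈ C.filter (fun R => 0 < x R) ↔ R ∈ C ∧ 0 < x R := by
    intro R; exact Finset.mem_filter
  have hbrf : ∀ R ∈ C, R ∈ brf A B Z := by
    intro R hR
    rw [← hC]
    exact Finset.mem_coe.mpr hR
  -- the order axioms
  have hone : ∀ R ∈ C.filter (fun R => 0 < x R), x R = 1 := by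
    refine chain_integral (A ∪ B).card C x hxQ hext rle ?_ ?_ ?_ ?_ ?_
    · exact fun R _ => rle_refl R
    · intro R hR S hS T hT h1 h2
      exact rle_trans_brf (hbrf R (((hmemF R).mp hR).1)) (hbrf S (((hmemF S).mp hS).1))
        (hbrf T (((hmemF T).mp hT).1)) h1 h2
    · intro R hR S hS h1 h2
      exact rle_antisymm_brf (hbrf R (((hmemF R).mp hR).1)) (hbrf S (((hmemF S).mp hS).1))
        h1 h2
    · intro R hR S hS hint
      obtain ⟨hRC, hxR⟩ := (hmemF R).mp hR
      obtain ⟨hSC, hxS⟩ := (hmemF S).mp hS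
      rcases eq_or_ne R S with rfl | hne'
      · exact Or.inl (rle_refl R)
      · exact comp_full hst hC rfl ⟨hxQ, hxsum⟩ hminP hRC hSC hxR hxS hne' hint
    · intro W hWF hWne hWch
      exact chain_grid hst hC (fun R hRW => hFC (hWF hRW)) hWne hWch
  have hzero : ∀ R ∈ C, x R ≠ 1 → x R = 0 := by
    intro R hR h1
    by_contra h0
    exact h1 (hone R ((hmemF R).mpr ⟨hR, lt_of_le_of_ne (hxQ.1 R) (Ne.symm h0)⟩))
  have hint01 : ∀ R ∈ C, x R = 0 ∨ x R = 1 := by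
    intro R hR
    by_cases h : x R = 1
    · exact Or.inr h
    · exact Or.inl (hzero R hR h)
  -- the support is independent
  have hindep : IndepFamily {R : Rect | R ∈ C ∧ 0 < x R} := by
    intro R hR S hS hne'
    obtain ⟨hRC, hxR⟩ := hR
    obtain ⟨hSC, hxS⟩ := hS
    by_contra h
    have hint : (R ∩ S).Nonempty := Set.nonempty_iff_ne_empty.mpr h
    have hcomp := comp_full hst hC rfl ⟨hxQ, hxsum⟩ hminP hRC hSC hxR hxS hne' hint
    have hWch : ∀ u ∈ ({R, S} : Finset Rect), ∀ w ∈ ({R, S} : Finset Rect),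
        rle u w ∨ rle w u := by
      intro u hu w hw
      rcases Finset.mem_insert.mp hu with rfl | hu' <;>
        rcases Finset.mem_insert.mp hw with rfl | hw'
      · exact Or.inl (rle_refl _)
      · rw [Finset.mem_singleton] at hw'; subst hw'; exact hcomp
      · rw [Finset.mem_singleton] at hu'; subst hu'; exact hcomp.symm
      · rw [Finset.mem_singleton] at hu' hw'; subst hu'; subst hw'
        exact Or.inl (rle_refl _)
    obtain ⟨i, j, hi1, hi2, hj1, hj2, hq⟩ := chain_grid hst hC
      (W := {R, S}) (fun T hT => by
        rcases Finset.mem_insert.mp hT with rfl | hT'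
        · exact hRC
        · rw [Finset.mem_singleton] at hT'; subst hT'; exact hSC)
      ⟨R, Finset.mem_insert_self R {S}⟩ hWch
    have hcon := hxQ.2.2 i j hi1 hi2 hj1 hj2
    have hRmem : R ∈ C.filter (fun T => ((i : ℝ), (j : ℝ)) ∈ T) :=
      Finset.mem_filter.mpr ⟨hRC, hq R (Finset.mem_insert_self R {S})⟩
    have hSmem : S ∈ C.filter (fun T => ((i : ℝ), (j : ℝ)) ∈ T) :=
      Finset.mem_filter.mpr ⟨hSC, hq S (by simp)⟩
    have hsub : ({R, S} : Finset Rect) ⊆ C.filter (fun T => ((i : ℝ), (j : ℝ)) ∈ T) := by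
      intro T hT
      rcases Finset.mem_insert.mp hT with rfl | hT'
      · exact hRmem
      · rw [Finset.mem_singleton] at hT'; subst hT'; exact hSmem
    have hpair : ∑ T ∈ ({R, S} : Finset Rect), x T = x R + x S :=
      Finset.sum_pair hne'
    have hbig : ∑ T ∈ ({R, S} : Finset Rect), x T ≤
        ∑ T ∈ C.filter (fun T => ((i : ℝ), (j : ℝ)) ∈ T), x T :=
      Finset.sum_le_sum_of_subset_of_nonneg hsub (fun T _ _ => hxQ.1 T)
    have hxR1 : x R = 1 := hone R ((hmemF R).mpr ⟨hRC, hxR⟩)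
    have hxS1 : x S = 1 := hone S ((hmemF S).mpr ⟨hSC, hxS⟩)
    rw [hpair, hxR1, hxS1] at hbig
    linarith
  -- support as a finset
  have hsupp : {R : Rect | R ∈ C ∧ 0 < x R} = ↑(C.filter (fun R => 0 < x R)) := by
    ext R
    simp [Finset.mem_filter]
  have hsub_brf : {R : Rect | R ∈ C ∧ 0 < x R} ⊆ brf A B Z := by
    intro R hR
    rw [← hC]
    exact Finset.mem_coe.mpr hR.1
  -- the LP value equals the support size
  have hsum1 : ∑ R ∈ C, x R = ((C.filter (fun R => 0 < x R)).card : ℝ) := by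
    rw [← Finset.sum_filter_add_sum_filter_not C (fun R => 0 < x R) x]
    have h1 : ∑ R ∈ C.filter (fun R => 0 < x R), x R
        = ((C.filter (fun R => 0 < x R)).card : ℝ) := by
      rw [Finset.card_eq_sum_ones, Nat.cast_sum]
      refine Finset.sum_congr rfl ?_
      intro R hR
      rw [hone R hR]
      norm_num
    have h2 : ∑ R ∈ C.filter (fun R => ¬ 0 < x R), x R = 0 := by
      refine Finset.sum_eq_zero ?_
      intro R hR
      obtain ⟨hRC, hnR⟩ := Finset.mem_filter.mp hR
      exact le_antisymm (not_lt.mp hnR) (hxQ.1 R)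
    rw [h1, h2, add_zero]
  -- maximum independent set size
  have hub : ∀ k ∈ {k | ∃ I : Finset Rect, ↑I ⊆ brf A B Z ∧ IndepFamily ↑I ∧ I.card = k},
      k ≤ (C.filter (fun R => 0 < x R)).card := by
    rintro k ⟨I, hIb, hInd, rfl⟩
    have hIC : ∀ R ∈ I, R ∈ C := by
      intro R hR
      rw [← Finset.mem_coe, hC]
      exact hIb (Finset.mem_coe.mpr hR)
    set χ : Rect → ℝ := fun R => if R ∈ I then (1 : ℝ) else 0 with hχ
    have hχQ : χ ∈ QSTAB (A ∪ B).card C := by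
      refine ⟨?_, ?_, ?_⟩
      · intro R
        simp only [hχ]
        split <;> norm_num
      · intro R hR
        simp only [hχ, if_neg (fun h => hR (hIC R h))]
      · intro i j hi1 hi2 hj1 hj2
        have hsum : ∑ R ∈ C.filter (fun T => ((i : ℝ), (j : ℝ)) ∈ T), χ R
            = (((C.filter (fun T => ((i : ℝ), (j : ℝ)) ∈ T)).filter
                (fun R => R ∈ I)).card : ℝ) := by
          rw [Finset.sum_boole]
        rw [hsum]
        have hcard1 : ((C.filter (fun T => ((i : ℝ), (j : ℝ)) ∈ T)).filter
            (fun R => R ∈ I)).card ≤ 1 := by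
          rw [Finset.card_le_one]
          intro R hR S hS
          obtain ⟨hR1, hRI⟩ := Finset.mem_filter.mp hR
          obtain ⟨hS1, hSI⟩ := Finset.mem_filter.mp hS
          by_contra hne'
          have := hInd R (Finset.mem_coe.mpr hRI) S (Finset.mem_coe.mpr hSI) hne'
          have hq : ((i : ℝ), (j : ℝ)) ∈ R ∩ S :=
            ⟨(Finset.mem_filter.mp hR1).2, (Finset.mem_filter.mp hS1).2⟩
          rw [this] at hq
          exact hq
        exact_mod_cast hcard1
      -- done
    have hχsum : ∑ R ∈ C, χ R = (I.card : ℝ) := by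
      have : ∑ R ∈ C, χ R = ((C.filter (fun R => R ∈ I)).card : ℝ) := by
        rw [Finset.sum_boole]
      rw [this]
      congr 1
      congr 1
      ext R
      simp only [Finset.mem_filter]
      exact ⟨fun h => h.2, fun h => ⟨hIC R h, h⟩⟩
    have h1 : (I.card : ℝ) ≤ misLP (A ∪ B).card C := by
      rw [← hχsum]
      exact le_misLP hst hC hχQ
    rw [← hxsum, hsum1] at h1
    exact_mod_cast h1
  have hmem : (C.filter (fun R => 0 < x R)).card ∈
      {k | ∃ I : Finset Rect, ↑I ⊆ brf A B Z ∧ IndepFamily ↑I ∧ I.card = k} := by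
    refine ⟨C.filter (fun R => 0 < x R), ?_, ?_, rfl⟩
    · rw [← hsupp]
      exact hsub_brf
    · rw [← hsupp]
      exact hindep
  have hmis : mis (brf A B Z) = (C.filter (fun R => 0 < x R)).card := by
    refine le_antisymm (csSup_le ⟨_, hmem⟩ hub) (le_csSup ⟨_, hub⟩ hmem)
  refine ⟨hint01, hindep, hsub_brf, ?_⟩
  rw [hsupp, Set.ncard_coe_finset, hmis]
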